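/- Let F be an induced-2C2-saturated family of subsets of [n] that contains the maximal chain C♭, and let k = |F \ C♭| be the number of non-chain elements of F. Then n − 1 ≤ 2k. -/
import Mathlib


/-- `F ⊆ 𝒫([n])` contains an induced copy of the poset `2C₂`: four sets
`A ⊊ A'`, `B ⊊ B'`, with each of `A, A'` incomparable to each of `B, B'`. -/
def Contains2C2 {n : ℕ} (F : Finset (Finset (Fin n))) : Prop :=
  ∃ A A' B B' : Finset (Fin n), A ∈ F ∧ A' ∈ F ∧ B ∈ F ∧ B' ∈ F ∧
    A ⊂ A' ∧ B ⊂ B' ∧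
    ¬ A ⊆ B ∧ ¬ B ⊆ A ∧ ¬ A ⊆ B' ∧ ¬ B' ⊆ A ∧
    ¬ A' ⊆ B ∧ ¬ B ⊆ A' ∧ ¬ A' ⊆ B' ∧ ¬ B' ⊆ A'

/-- `F` is induced-`2C₂`-saturated: it is induced-`2C₂`-free, and adding any
missing set creates an induced copy of `2C₂`. -/
def Saturated2C2 {n : ℕ} (F : Finset (Finset (Fin n))) : Prop :=
  ¬ Contains2C2 F ∧ ∀ S : Finset (Fin n), S ∉ F → Contains2C2 (insert S F)

/-- The chain element `C_i = [i] = {1,…,i}` (0-indexed: `{x : Fin n | x < i}`). -/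
def chainC (n i : ℕ) : Finset (Fin n) := Finset.univ.filter (fun x => (x : ℕ) < i)

/-- The maximal chain `C♭ = {C_0, C_1, …, C_n}`. -/
def Cflat (n : ℕ) : Finset (Finset (Fin n)) := (Finset.range (n + 1)).image (chainC n)

/-- The shackle `S_i = [i-1] ∪ {i+1}` (1-indexed elements; 0-indexed:
`{x : Fin n | x + 1 < i or x = i}`), meaningful for `1 ≤ i ≤ n-1`. -/
def shackle (n i : ℕ) : Finset (Fin n) :=
  Finset.univ.filter (fun x => (x : ℕ) + 1 < i ∨ (x : ℕ) = i)

/-- Two sets are comparable if one contains the other. -/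
def Comp {n : ℕ} (A B : Finset (Fin n)) : Prop := A ⊆ B ∨ B ⊆ A

/-- Two sets are incomparable if neither contains the other. -/
def Incomp {n : ℕ} (A B : Finset (Fin n)) : Prop := ¬ A ⊆ B ∧ ¬ B ⊆ A

namespace NCCount

variable {n : ℕ}

lemma mem_chainC {i : ℕ} {x : Fin n} : x ∈ chainC n i ↔ (x : ℕ) < i := by
  simp [chainC]

lemma mem_shackle {i : ℕ} {x : Fin n} :
    x ∈ shackle n i ↔ (x : ℕ) + 1 < i ∨ (x : ℕ) = i := by
  simp [shackle]

lemma chainC_mem_Cflat {i : ℕ} (h : i ≤ n) : chainC n i ∈ Cflat n := by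
  simp only [Cflat, Finset.mem_image]
  exact ⟨i, by simp [Finset.mem_range]; omega, rfl⟩

lemma chainC_subset {i i' : ℕ} (h : i ≤ i') : chainC n i ⊆ chainC n i' := by
  intro x hx
  rw [mem_chainC] at hx ⊢
  omega

lemma chainC_ssubset {i i' : ℕ} (h : i < i') (h' : i ≤ n) (hi' : i < n) :
    chainC n i ⊂ chainC n i' := by
  refine ⟨chainC_subset (le_of_lt h), fun hsub => ?_⟩
  have : (⟨i, hi'⟩ : Fin n) ∈ chainC n i' := by rw [mem_chainC]; simpa using h
  have := hsub this
  rw [mem_chainC] at this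
  simp at this

/-- a set with a member above a non-member is not a chain set -/
lemma notchain {W : Finset (Fin n)} {x y : Fin n} (hx : x ∈ W) (hy : y ∉ W)
    (hxy : (y : ℕ) < (x : ℕ)) : W ∉ Cflat n := by
  intro hW
  simp only [Cflat, Finset.mem_image] at hW
  obtain ⟨p, _, rfl⟩ := hW
  rw [mem_chainC] at hx hy
  omega

variable {F : Finset (Finset (Fin n))}

/-- L0: the freeness window. -/
lemma window (hF : Saturated2C2 F) (hC : Cflat n ⊆ F) {V V' : Finset (Fin n)}
    (hV : V ∈ F) (hV' : V' ∈ F) (hss : V ⊂ V') {x z : Fin n}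
    (hx : x ∉ V') (hz : z ∈ V) (h : (x : ℕ) + 2 ≤ (z : ℕ)) : False := by
  have hzn : (z : ℕ) < n := z.isLt
  have hxV : x ∉ V := fun hxx => hx (hss.1 hxx)
  have hzV' : z ∈ V' := hss.1 hz
  have hCa : chainC n ((x : ℕ) + 1) ∈ F := hC (chainC_mem_Cflat (by omega))
  have hCb : chainC n ((x : ℕ) + 2) ∈ F := hC (chainC_mem_Cflat (by omega))
  have hxa : x ∈ chainC n ((x : ℕ) + 1) := by rw [mem_chainC]; omega
  have hxb : x ∈ chainC n ((x : ℕ) + 2) := by rw [mem_chainC]; omega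
  have hza : z ∉ chainC n ((x : ℕ) + 1) := by rw [mem_chainC]; omega
  have hzb : z ∉ chainC n ((x : ℕ) + 2) := by rw [mem_chainC]; omega
  exact hF.1 ⟨chainC n ((x : ℕ) + 1), chainC n ((x : ℕ) + 2), V, V',
    hCa, hCb, hV, hV',
    chainC_ssubset (by omega) (by omega) (by omega), hss,
    fun hsub => hxV (hsub hxa), fun hsub => hza (hsub hz),
    fun hsub => hx (hsub hxa), fun hsub => hza (hsub hzV'),
    fun hsub => hxV (hsub hxb), fun hsub => hzb (hsub hz),
    fun hsub => hx (hsub hxb), fun hsub => hzb (hsub hzV')⟩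

/-- L1: extraction of a structured copy from saturation. -/
lemma extract (hfree : ¬ Contains2C2 F) {S : Finset (Fin n)}
    (hcopy : Contains2C2 (insert S F)) :
    ∃ R V V', R ∈ F ∧ V ∈ F ∧ V' ∈ F ∧ (R ⊂ S ∨ S ⊂ R) ∧ V ⊂ V' ∧
      ¬ V ⊆ S ∧ ¬ S ⊆ V ∧ ¬ V' ⊆ S ∧ ¬ S ⊆ V' ∧
      ¬ R ⊆ V ∧ ¬ V ⊆ R ∧ ¬ R ⊆ V' ∧ ¬ V' ⊆ R := by
  obtain ⟨A, A', B, B', hA, hA', hB, hB', hAA, hBB,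
    h1, h2, h3, h4, h5, h6, h7, h8⟩ := hcopy
  rw [Finset.mem_insert] at hA hA' hB hB'
  by_cases eA : A = S
  · subst eA
    have hA'F : A' ∈ F := hA'.resolve_left (fun h => absurd (h ▸ hAA) (ssubset_irrefl _))
    have hBF : B ∈ F := hB.resolve_left (fun h => h1 (by rw [h]))
    have hB'F : B' ∈ F := hB'.resolve_left (fun h => h3 (by rw [h]))
    exact ⟨A', B, B', hA'F, hBF, hB'F, Or.inr hAA, hBB, h2, h1, h4, h3, h5, h6, h7, h8⟩
  · have hAF : A ∈ F := hA.resolve_left eA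
    by_cases eA' : A' = S
    · subst eA'
      have hBF : B ∈ F := hB.resolve_left (fun h => h5 (by rw [h]))
      have hB'F : B' ∈ F := hB'.resolve_left (fun h => h7 (by rw [h]))
      exact ⟨A, B, B', hAF, hBF, hB'F, Or.inl hAA, hBB, h6, h5, h8, h7, h1, h2, h3, h4⟩
    · have hA'F : A' ∈ F := hA'.resolve_left eA'
      by_cases eB : B = S
      · subst eB
        have hB'F : B' ∈ F := hB'.resolve_left (fun h => absurd (h ▸ hBB) (ssubset_irrefl _))
        exact ⟨B', A, A', hB'F, hAF, hA'F, Or.inr hBB, hAA, h1, h2, h5, h6, h4, h3, h8, h7⟩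
      · have hBF : B ∈ F := hB.resolve_left eB
        by_cases eB' : B' = S
        · subst eB'
          exact ⟨B, A, A', hBF, hAF, hA'F, Or.inl hBB, hAA, h3, h4, h7, h8, h2, h1, h6, h5⟩
        · have hB'F : B' ∈ F := hB'.resolve_left eB'
          exact absurd ⟨A, A', B, B', hAF, hA'F, hBF, hB'F, hAA, hBB,
            h1, h2, h3, h4, h5, h6, h7, h8⟩ hfree


/-- nonchain members with prefix value exactly `v` (0-indexed missing element `v`). -/
def nset (F : Finset (Finset (Fin n))) (v : ℕ) : Finset (Finset (Fin n)) :=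
  (F \ Cflat n).filter (fun W => chainC n v ⊆ W ∧ ∀ x : Fin n, (x : ℕ) = v → x ∉ W)

/-- nonchain members whose maximum element (1-indexed) is exactly `t`. -/
def eset (F : Finset (Finset (Fin n))) (t : ℕ) : Finset (Finset (Fin n)) :=
  (F \ Cflat n).filter (fun W => (∀ x ∈ W, (x : ℕ) < t) ∧ ∃ x ∈ W, (x : ℕ) + 1 = t)

def bigW (F : Finset (Finset (Fin n))) (v : ℕ) : Finset (Finset (Fin n)) :=
  (F \ Cflat n).filter (fun W => chainC n v ⊆ W)

def bigM (F : Finset (Finset (Fin n))) (t : ℕ) : Finset (Finset (Fin n)) :=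
  (F \ Cflat n).filter (fun W => ∃ x ∈ W, t ≤ (x : ℕ) + 1)

def Gc (F : Finset (Finset (Fin n))) (j : ℕ) : ℕ :=
  (bigW F (j - 1)).card + (bigM F j).card

lemma card_bigW {v : ℕ} (hv : v < n) :
    (bigW F v).card = (nset F v).card + (bigW F (v + 1)).card := by
  classical
  have hsplit : bigW F v = nset F v ∪ bigW F (v + 1) := by
    ext W
    simp only [bigW, nset, Finset.mem_union, Finset.mem_filter]
    constructor
    · rintro ⟨hW, hsub⟩
      by_cases he : (⟨v, hv⟩ : Fin n) ∈ W
      · refine Or.inr ⟨hW, fun x hx => ?_⟩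
        rw [mem_chainC] at hx
        rcases Nat.lt_or_ge (x : ℕ) v with h | h
        · exact hsub (by rw [mem_chainC]; exact h)
        · have : (x : ℕ) = v := by omega
          have : x = (⟨v, hv⟩ : Fin n) := Fin.ext this
          rwa [this]
      · exact Or.inl ⟨hW, hsub, fun x hx => by
          have : x = (⟨v, hv⟩ : Fin n) := Fin.ext hx
          rwa [this]⟩
    · rintro (⟨hW, hsub, _⟩ | ⟨hW, hsub⟩)
      · exact ⟨hW, hsub⟩
      · exact ⟨hW, fun x hx => hsub ((chainC_subset (by omega)) hx)⟩
  have hdisj : Disjoint (nset F v) (bigW F (v + 1)) := by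
    rw [Finset.disjoint_left]
    rintro W hW1 hW2
    simp only [nset, bigW, Finset.mem_filter] at hW1 hW2
    have he : (⟨v, hv⟩ : Fin n) ∈ W := hW2.2 (by rw [mem_chainC]; simp)
    exact hW1.2.2 _ rfl he
  rw [hsplit, Finset.card_union_of_disjoint hdisj]

lemma card_bigM (t : ℕ) :
    (bigM F t).card = (eset F t).card + (bigM F (t + 1)).card := by
  classical
  have hsplit : bigM F t = eset F t ∪ bigM F (t + 1) := by
    ext W
    simp only [bigM, eset, Finset.mem_union, Finset.mem_filter]
    constructor
    · rintro ⟨hW, x, hx, hxt⟩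
      by_cases hbig : ∃ y ∈ W, t + 1 ≤ (y : ℕ) + 1
      · exact Or.inr ⟨hW, hbig⟩
      · push_neg at hbig
        refine Or.inl ⟨hW, fun y hy => by have := hbig y hy; omega, x, hx, by
          have := hbig x hx; omega⟩
    · rintro (⟨hW, _, x, hx, hxt⟩ | ⟨hW, x, hx, hxt⟩)
      · exact ⟨hW, x, hx, by omega⟩
      · exact ⟨hW, x, hx, by omega⟩
  have hdisj : Disjoint (eset F t) (bigM F (t + 1)) := by
    rw [Finset.disjoint_left]
    rintro W hW1 hW2
    simp only [eset, bigM, Finset.mem_filter] at hW1 hW2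
    obtain ⟨y, hy, hyt⟩ := hW2.2
    have := hW1.2.1 y hy
    omega
  rw [hsplit, Finset.card_union_of_disjoint hdisj]

lemma Gc_peel {j : ℕ} (hj : 1 ≤ j) (hjn : j ≤ n) :
    Gc F j = (nset F (j - 1)).card + (eset F j).card + Gc F (j + 1) := by
  have h1 : (bigW F (j - 1)).card = (nset F (j - 1)).card + (bigW F j).card := by
    have := card_bigW (F := F) (v := j - 1) (by omega)
    rwa [show j - 1 + 1 = j by omega] at this
  have h2 : (bigM F j).card = (eset F j).card + (bigM F (j + 1)).card := card_bigM (F := F) j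
  simp only [Gc, show j + 1 - 1 = j by omega]
  omega

lemma empty_eq_chainC_zero : (∅ : Finset (Fin n)) = chainC n 0 := by
  ext x; simp [mem_chainC]

lemma Gc_one : Gc F 1 = 2 * (F \ Cflat n).card := by
  have h1 : bigW F 0 = F \ Cflat n := by
    apply Finset.filter_true_of_mem
    intro W _
    intro x hx
    rw [mem_chainC] at hx
    omega
  have h2 : bigM F 1 = F \ Cflat n := by
    apply Finset.filter_true_of_mem
    intro W hW
    have hne : W.Nonempty := by
      rcases Finset.eq_empty_or_nonempty W with h | h
      · exfalso
        rw [Finset.mem_sdiff] at hW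
        exact hW.2 (h ▸ empty_eq_chainC_zero ▸ chainC_mem_Cflat (by omega))
      · exact h
    obtain ⟨x, hx⟩ := hne
    exact ⟨x, hx, by omega⟩
  simp [Gc, h1, h2]
  omega


/-- L2: the key structural lemma at index `j` (1-indexed gap), when no nonchain
member has max-value `j` and the shackle `S_j` is missing. -/
lemma L2 (hF : Saturated2C2 F) (hC : Cflat n ⊆ F) {j : ℕ} (hj1 : 1 ≤ j) (hjn : j + 1 ≤ n)
    (hempty : eset F j = ∅) (hsj : shackle n j ∉ F) :
    ∃ V' ∈ nset F j, ((nset F (j-1)).Nonempty ∨ (∃ V ∈ nset F j, V ≠ V') ∨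
      (eset F (j+1)).Nonempty ∨ ∃ Q ∈ eset F (j+2), Q ⊆ V' ∧ ¬ chainC n (j-1) ⊆ Q) := by
  classical
  have hjn' : j < n := by omega
  have hj1n : j - 1 < n := by omega
  set S := shackle n j with hSdef
  set ej : Fin n := ⟨j, hjn'⟩ with hejdef
  set ej1 : Fin n := ⟨j - 1, hj1n⟩ with hej1def
  have hejval : (ej : ℕ) = j := rfl
  have hej1val : (ej1 : ℕ) = j - 1 := rfl
  have hejS : ej ∈ S := by rw [hSdef, mem_shackle]; right; exact hejval
  have hej1S : ej1 ∉ S := by rw [hSdef, mem_shackle]; rw [hej1val]; omega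
  have hchS : chainC n (j - 1) ⊆ S := by
    intro x hx; rw [mem_chainC] at hx; rw [hSdef, mem_shackle]; left; omega
  obtain ⟨R, V, V', hR, hV, hV', hRS, hVV, hVS, hSV, hV'S, hSV', hRV, hVR, hRV', hV'R⟩ :=
    extract hF.1 (hF.2 S hsj)
  obtain ⟨y, hyV, hyS⟩ := Finset.not_subset.mp hVS
  have hy : j - 1 ≤ (y:ℕ) ∧ (y:ℕ) ≠ j := by
    rw [hSdef, mem_shackle] at hyS; push_neg at hyS; omega
  by_cases hc1 : chainC n (j-1) ⊆ V'
  case neg =>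
    exfalso
    obtain ⟨x, hxch, hxV'⟩ := Finset.not_subset.mp hc1
    rw [mem_chainC] at hxch
    have hall : ∀ z ∈ V, (z:ℕ) < j := by
      intro z hz
      by_contra hge
      exact window hF hC hV hV' hVV hxV' hz (by omega)
    have hyval : (y:ℕ) + 1 = j := by have := hall y hyV; omega
    have hVnc : V ∉ Cflat n := notchain hyV (fun hxx => hxV' (hVV.1 hxx)) (by omega)
    have hmem : V ∈ eset F j := by
      simp only [eset, Finset.mem_filter, Finset.mem_sdiff]
      exact ⟨⟨hV, hVnc⟩, hall, y, hyV, hyval⟩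
    rw [hempty] at hmem; exact absurd hmem (Finset.notMem_empty _)
  case pos =>
    obtain ⟨w, hwS, hwV'⟩ := Finset.not_subset.mp hSV'
    have hwval : (w:ℕ) = j := by
      rw [hSdef, mem_shackle] at hwS
      rcases hwS with h | h
      · exact absurd (hc1 (by rw [mem_chainC]; omega)) hwV'
      · exact h
    have hejV' : ej ∉ V' := by
      have hwe : w = ej := Fin.ext (by rw [hwval, hejval])
      rwa [hwe] at hwV'
    by_cases hej1V' : ej1 ∈ V'
    case neg =>
      exfalso
      have hyne : (y:ℕ) ≠ j - 1 := by
        intro h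
        have hye : y = ej1 := Fin.ext (by rw [h, hej1val])
        exact hej1V' (hye ▸ (hVV.1 hyV))
      exact window hF hC hV hV' hVV hej1V' hyV (by rw [hej1val]; omega)
    case pos =>
      have hcj : chainC n j ⊆ V' := by
        intro x hx; rw [mem_chainC] at hx
        rcases Nat.lt_or_ge (x:ℕ) (j-1) with h | h
        · exact hc1 (by rw [mem_chainC]; exact h)
        · have hxe : x = ej1 := Fin.ext (by rw [hej1val]; omega)
          rwa [hxe]
      by_cases hV'chain : V' = chainC n j
      case pos =>
        exfalso
        have hall : ∀ z ∈ V, (z:ℕ) < j := fun z hz => by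
          have := hVV.1 hz; rw [hV'chain, mem_chainC] at this; exact this
        have hyval : (y:ℕ) + 1 = j := by have := hall y hyV; omega
        obtain ⟨x0, hx0c, hx0V⟩ := Finset.exists_of_ssubset (hV'chain ▸ hVV)
        rw [mem_chainC] at hx0c
        have hx0y : (x0:ℕ) < (y:ℕ) := by
          rcases Nat.lt_or_ge (x0:ℕ) (y:ℕ) with h | h
          · exact h
          · exfalso
            have hxy : x0 = y := Fin.ext (by omega)
            rw [hxy] at hx0V; exact hx0V hyV
        have hVnc : V ∉ Cflat n := notchain hyV hx0V hx0y
        have hmem : V ∈ eset F j := by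
          simp only [eset, Finset.mem_filter, Finset.mem_sdiff]
          exact ⟨⟨hV, hVnc⟩, hall, y, hyV, hyval⟩
        rw [hempty] at hmem; exact absurd hmem (Finset.notMem_empty _)
      case neg =>
        obtain ⟨v1, hv1V', hv1c⟩ : ∃ v1 ∈ V', v1 ∉ chainC n j := by
          by_contra h; push_neg at h
          exact hV'chain (Finset.Subset.antisymm h hcj)
        rw [mem_chainC] at hv1c; push_neg at hv1c
        have hv1j : j < (v1:ℕ) := by
          rcases Nat.lt_or_ge j (v1:ℕ) with h | h
          · exact h
          · exfalso
            have hve : v1 = ej := Fin.ext (by rw [hejval]; omega)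
            rw [hve] at hv1V'; exact hejV' hv1V'
        have hV'nc : V' ∉ Cflat n := notchain hv1V' hejV' (by rw [hejval]; omega)
        have hV'mem : V' ∈ nset F j := by
          simp only [nset, Finset.mem_filter, Finset.mem_sdiff]
          refine ⟨⟨hV', hV'nc⟩, hcj, fun x hx => ?_⟩
          have hxe : x = ej := Fin.ext (by rw [hejval]; exact hx)
          rw [hxe]; exact hejV'
        refine ⟨V', hV'mem, ?_⟩
        by_cases hc2V : chainC n (j-1) ⊆ V
        case pos =>
          by_cases hej1V : ej1 ∈ V
          case pos =>
            have hcjV : chainC n j ⊆ V := by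
              intro x hx; rw [mem_chainC] at hx
              rcases Nat.lt_or_ge (x:ℕ) (j-1) with h | h
              · exact hc2V (by rw [mem_chainC]; exact h)
              · have hxe : x = ej1 := Fin.ext (by rw [hej1val]; omega)
                rwa [hxe]
            by_cases hVchain : V = chainC n j
            case pos =>
              rcases hRS with hRsub | hRsup
              · -- R ⊂ S : eset (j+1) is nonempty via R
                obtain ⟨r, hrR, hrV⟩ := Finset.not_subset.mp hRV
                have hrS := hRsub.1 hrR
                rw [hSdef, mem_shackle] at hrS
                have hrval : (r:ℕ) = j := by
                  rcases hrS with h | h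
                  · exfalso; apply hrV; rw [hVchain, mem_chainC]; omega
                  · exact h
                have hRnc : R ∉ Cflat n := by
                  refine notchain hrR (fun hcc => hej1S (hRsub.1 hcc)) ?_
                  rw [hej1val]; omega
                have hmem : R ∈ eset F (j+1) := by
                  simp only [eset, Finset.mem_filter, Finset.mem_sdiff]
                  refine ⟨⟨hR, hRnc⟩, fun x hx => ?_, r, hrR, by omega⟩
                  have hxS := hRsub.1 hx
                  rw [hSdef, mem_shackle] at hxS
                  omega
                exact Or.inr (Or.inr (Or.inl ⟨R, hmem⟩))
              · -- S ⊂ R : nset (j-1) is nonempty via R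
                obtain ⟨v0, hv0V, hv0R⟩ := Finset.not_subset.mp hVR
                rw [hVchain, mem_chainC] at hv0V
                have hv0val : (v0:ℕ) = j - 1 := by
                  rcases Nat.lt_or_ge (v0:ℕ) (j-1) with h | h
                  · exfalso
                    exact hv0R (hRsup.1 (hchS (by rw [mem_chainC]; exact h)))
                  · omega
                have hej1R : ej1 ∉ R := by
                  have hve : v0 = ej1 := Fin.ext (by rw [hej1val]; exact hv0val)
                  rwa [hve] at hv0R
                have hRnc : R ∉ Cflat n :=
                  notchain (hRsup.1 hejS) hej1R (by rw [hejval, hej1val]; omega)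
                have hmem : R ∈ nset F (j-1) := by
                  simp only [nset, Finset.mem_filter, Finset.mem_sdiff]
                  refine ⟨⟨hR, hRnc⟩, fun x hx => hRsup.1 (hchS hx), fun x hx => ?_⟩
                  have hxe : x = ej1 := Fin.ext (by rw [hej1val]; exact hx)
                  rw [hxe]; exact hej1R
                exact Or.inl ⟨R, hmem⟩
            case neg =>
              have hejV : ej ∉ V := fun h => hejV' (hVV.1 h)
              obtain ⟨v1, hv1V, hv1c⟩ : ∃ v1 ∈ V, v1 ∉ chainC n j := by
                by_contra h; push_neg at h
                exact hVchain (Finset.Subset.antisymm h hcjV)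
              rw [mem_chainC] at hv1c; push_neg at hv1c
              have hv1j : j < (v1:ℕ) := by
                rcases Nat.lt_or_ge j (v1:ℕ) with h | h
                · exact h
                · exfalso
                  have hve : v1 = ej := Fin.ext (by rw [hejval]; omega)
                  rw [hve] at hv1V; exact hejV hv1V
              have hVnc : V ∉ Cflat n := notchain hv1V hejV (by rw [hejval]; omega)
              have hmem : V ∈ nset F j := by
                simp only [nset, Finset.mem_filter, Finset.mem_sdiff]
                refine ⟨⟨hV, hVnc⟩, hcjV, fun x hx => ?_⟩
                have hxe : x = ej := Fin.ext (by rw [hejval]; exact hx)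
                rw [hxe]; exact hejV
              exact Or.inr (Or.inl ⟨V, hmem, hVV.ne⟩)
          case neg =>
            -- V ∈ nset (j-1)
            have hyne : (y:ℕ) ≠ j - 1 := by
              intro h
              have hye : y = ej1 := Fin.ext (by rw [hej1val]; exact h)
              exact hej1V (hye ▸ hyV)
            have hVnc : V ∉ Cflat n := notchain hyV hej1V (by rw [hej1val]; omega)
            have hmem : V ∈ nset F (j-1) := by
              simp only [nset, Finset.mem_filter, Finset.mem_sdiff]
              refine ⟨⟨hV, hVnc⟩, hc2V, fun x hx => ?_⟩
              have hxe : x = ej1 := Fin.ext (by rw [hej1val]; exact hx)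
              rw [hxe]; exact hej1V
            exact Or.inl ⟨V, hmem⟩
        case neg =>
          obtain ⟨x0, hx0c, hx0V⟩ := Finset.not_subset.mp hc2V
          rw [mem_chainC] at hx0c
          by_cases hbig : ∃ z ∈ V, j + 1 ≤ (z:ℕ)
          case pos =>
            obtain ⟨z, hzV, hzval⟩ := hbig
            have hall : ∀ u ∈ V, (u:ℕ) < j + 2 := by
              intro u hu; by_contra hge
              exact window hF hC hV hV' hVV hejV' hu (by rw [hejval]; omega)
            have hzval2 : (z:ℕ) + 1 = j + 2 := by have := hall z hzV; omega
            have hVnc : V ∉ Cflat n := notchain hzV hx0V (by omega)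
            have hQ : V ∈ eset F (j+2) := by
              simp only [eset, Finset.mem_filter, Finset.mem_sdiff]
              exact ⟨⟨hV, hVnc⟩, hall, z, hzV, hzval2⟩
            exact Or.inr (Or.inr (Or.inr ⟨V, hQ, hVV.1, hc2V⟩))
          case neg =>
            exfalso
            push_neg at hbig
            have hyval : (y:ℕ) + 1 = j := by
              have h1 := hbig y hyV
              omega
            have hall : ∀ z ∈ V, (z:ℕ) < j := by
              intro z hz
              have h1 := hbig z hz
              have hzj : (z:ℕ) ≠ j := by
                intro h
                have hze : z = ej := Fin.ext (by rw [hejval]; exact h)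
                exact hejV' (hVV.1 (hze ▸ hz))
              omega
            have hVnc : V ∉ Cflat n := notchain hyV hx0V (by omega)
            have hmem : V ∈ eset F j := by
              simp only [eset, Finset.mem_filter, Finset.mem_sdiff]
              exact ⟨⟨hV, hVnc⟩, hall, y, hyV, hyval⟩
            rw [hempty] at hmem; exact absurd hmem (Finset.notMem_empty _)


lemma shackle_mem_nset {k : ℕ} (hk1 : 1 ≤ k) (hkn : k + 1 ≤ n) (hmem : shackle n k ∈ F) :
    shackle n k ∈ nset F (k - 1) := by
  have hkn' : k < n := by omega
  have hk1n : k - 1 < n := by omega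
  have hvk : ((⟨k, hkn'⟩ : Fin n) : ℕ) = k := rfl
  have hvk1 : ((⟨k - 1, hk1n⟩ : Fin n) : ℕ) = k - 1 := rfl
  have hin : (⟨k, hkn'⟩ : Fin n) ∈ shackle n k := by rw [mem_shackle, hvk]; right; rfl
  have hout : (⟨k - 1, hk1n⟩ : Fin n) ∉ shackle n k := by rw [mem_shackle, hvk1]; omega
  have hnc : shackle n k ∉ Cflat n := notchain hin hout (by rw [hvk, hvk1]; omega)
  simp only [nset, Finset.mem_filter, Finset.mem_sdiff]
  refine ⟨⟨hmem, hnc⟩, ?_, fun x hx => ?_⟩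
  · intro x hx; rw [mem_chainC] at hx; rw [mem_shackle]; left; omega
  · have hxe : x = (⟨k - 1, hk1n⟩ : Fin n) := Fin.ext (by rw [hvk1]; exact hx)
    rw [hxe]; exact hout

lemma shackle_mem_eset {k : ℕ} (hk1 : 1 ≤ k) (hkn : k + 1 ≤ n) (hmem : shackle n k ∈ F) :
    shackle n k ∈ eset F (k + 1) := by
  have hkn' : k < n := by omega
  have hk1n : k - 1 < n := by omega
  have hvk : ((⟨k, hkn'⟩ : Fin n) : ℕ) = k := rfl
  have hvk1 : ((⟨k - 1, hk1n⟩ : Fin n) : ℕ) = k - 1 := rfl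
  have hin : (⟨k, hkn'⟩ : Fin n) ∈ shackle n k := by rw [mem_shackle, hvk]; right; rfl
  have hout : (⟨k - 1, hk1n⟩ : Fin n) ∉ shackle n k := by rw [mem_shackle, hvk1]; omega
  have hnc : shackle n k ∉ Cflat n := notchain hin hout (by rw [hvk, hvk1]; omega)
  simp only [eset, Finset.mem_filter, Finset.mem_sdiff]
  refine ⟨⟨hmem, hnc⟩, fun x hx => ?_, ⟨k, hkn'⟩, hin, by rw [hvk]⟩
  rw [mem_shackle] at hx; omega

lemma main_ind (hF : Saturated2C2 F) (hC : Cflat n ⊆ F) :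
    ∀ d j, 1 ≤ j → n ≤ j + d → n - j ≤ Gc F j := by
  intro d
  induction d with
  | zero =>
    intro j _ hn
    have : n - j = 0 := by omega
    omega
  | succ d ih =>
    intro j hj hn
    by_cases hle : n ≤ j + d
    · exact ih j hj hle
    · have hj1n : j + 1 ≤ n := by omega
      have hpeel1 : Gc F j = (nset F (j-1)).card + (eset F j).card + Gc F (j+1) :=
        Gc_peel hj (by omega)
      rcases Finset.eq_empty_or_nonempty (eset F j) with hempty | hne
      swap
      · have hb : 1 ≤ (eset F j).card := Finset.card_pos.mpr hne
        have hIH := ih (j+1) (by omega) (by omega)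
        omega
      · by_cases hsj : shackle n j ∈ F
        · have hmem := shackle_mem_nset hj hj1n hsj
          have ha : 1 ≤ (nset F (j-1)).card := Finset.card_pos.mpr ⟨_, hmem⟩
          have hIH := ih (j+1) (by omega) (by omega)
          omega
        · obtain ⟨V', hV', hdisj⟩ := L2 hF hC hj hj1n hempty hsj
          have haj : 1 ≤ (nset F j).card := Finset.card_pos.mpr ⟨_, hV'⟩
          have hpeel2 : Gc F (j+1) = (nset F j).card + (eset F (j+1)).card + Gc F (j+2) := by
            have h := Gc_peel (F := F) (j := j + 1) (by omega) (by omega)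
            rwa [show j + 1 - 1 = j by omega] at h
          rcases hdisj with h1 | h2 | h3 | h4
          · have ha : 1 ≤ (nset F (j-1)).card := Finset.card_pos.mpr h1
            have hIH := ih (j+1) (by omega) (by omega)
            omega
          · obtain ⟨V, hVmem, hVne⟩ := h2
            have h2c : 2 ≤ (nset F j).card := by
              rw [show (2:ℕ) = 1 + 1 by rfl]
              exact Finset.one_lt_card.mpr ⟨V, hVmem, V', hV', hVne⟩
            have hIH := ih (j+2) (by omega) (by omega)
            omega
          · have hb2 : 1 ≤ (eset F (j+1)).card := Finset.card_pos.mpr h3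
            have hIH := ih (j+2) (by omega) (by omega)
            omega
          · obtain ⟨Q, hQ, hQsub, hQnc⟩ := h4
            have hj2n : j + 2 ≤ n := by
              simp only [eset, Finset.mem_filter] at hQ
              obtain ⟨x, _, hxv⟩ := hQ.2.2
              have := x.isLt
              omega
            have hb3 : 1 ≤ (eset F (j+2)).card := Finset.card_pos.mpr ⟨Q, hQ⟩
            have hpeel3 : Gc F (j+2) = (nset F (j+1)).card + (eset F (j+2)).card + Gc F (j+3) := by
              have h := Gc_peel (F := F) (j := j + 2) (by omega) (by omega)
              rwa [show j + 2 - 1 = j + 1 by omega] at h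
            rcases Finset.eq_empty_or_nonempty (eset F (j+1)) with hempty2 | hne2
            swap
            · have hb2 : 1 ≤ (eset F (j+1)).card := Finset.card_pos.mpr hne2
              have hIH := ih (j+2) (by omega) (by omega)
              omega
            · by_cases hsk : shackle n (j+1) ∈ F
              · by_cases hveq : V' = shackle n (j+1)
                · have hV'e : V' ∈ eset F (j+2) := by
                    have h := shackle_mem_eset (k := j + 1) (by omega) (by omega) hsk
                    rwa [← hveq] at h
                  have hQV' : Q ≠ V' := by
                    intro h
                    apply hQnc
                    rw [h]
                    have hsub : chainC n j ⊆ V' := by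
                      simp only [nset, Finset.mem_filter] at hV'
                      exact hV'.2.1
                    exact fun x hx => hsub (chainC_subset (by omega) hx)
                  have h2c : 2 ≤ (eset F (j+2)).card := by
                    rw [show (2:ℕ) = 1 + 1 by rfl]
                    exact Finset.one_lt_card.mpr ⟨Q, hQ, V', hV'e, hQV'⟩
                  have hIH := ih (j+3) (by omega) (by omega)
                  omega
                · have hmem : shackle n (j+1) ∈ nset F j := by
                    have h := shackle_mem_nset (k := j + 1) (by omega) (by omega) hsk
                    rwa [show j + 1 - 1 = j by omega] at h
                  have h2c : 2 ≤ (nset F j).card := by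
                    rw [show (2:ℕ) = 1 + 1 by rfl]
                    exact Finset.one_lt_card.mpr ⟨shackle n (j+1), hmem, V', hV', fun h => hveq h.symm⟩
                  have hIH := ih (j+2) (by omega) (by omega)
                  omega
              · obtain ⟨V'', hV'', _⟩ := L2 hF hC (j := j + 1) (by omega) (by omega) hempty2 hsk
                have ha2 : 1 ≤ (nset F (j+1)).card := Finset.card_pos.mpr ⟨_, hV''⟩
                have hIH := ih (j+3) (by omega) (by omega)
                omega

lemma final (hF : Saturated2C2 F) (hC : Cflat n ⊆ F) :
    n - 1 ≤ 2 * (F \ Cflat n).card := by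
  rcases Nat.eq_zero_or_pos n with h0 | hpos
  · simp [h0]
  · have h := main_ind hF hC (n - 1) 1 le_rfl (by omega)
    rwa [Gc_one] at h

end NCCount

/-- If `F` is induced-`2C₂`-saturated and contains the maximal chain `C♭`,
then the number `k` of non-chain elements satisfies `n - 1 ≤ 2k`. -/
theorem non_chain_count (n : ℕ)
    (F : Finset (Finset (Fin n))) (hF : Saturated2C2 F) (hC : Cflat n ⊆ F) :
    n - 1 ≤ 2 * (F \ Cflat n).card :=
  NCCount.final hF hC
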